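/- Fix an integer d ≥ 16 and γ > 0, let Π := { π ∈ ℝ^d : ‖π‖₂ ≤ 1 } be the Euclidean unit ball, and set ε := min( e^{d/8}/(6γ), 1/2 ). For each unit vector v ∈ ℝ^d define f_v(π) := relu(⟨v, π⟩ − (1 − ε)), where relu(x) = max(x, 0), so that f_v has maximal value ε over Π (attained at π = v). Then for every Borel probability measure p on Π: sup_{v : ‖v‖₂ = 1} ∫ [ ε − f_v(π) − γ·D_H²(Rad(f_v(π)), Rad(0)) ] dp(π) ≥ min( e^{d/8}/(24γ), 1/8 ). -/

import Mathlib

open MeasureTheory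
open scoped RealInnerProductSpace
open scoped ENNReal

/-- Squared Hellinger distance `D_H²(P,Q) = ∫ (√(dP/dν) − √(dQ/dν))² dν`
computed with the dominating measure `ν = P + Q`. -/
noncomputable def sqHellinger {α : Type*} [MeasurableSpace α] (P Q : Measure α) : ℝ :=
  ∫ x, (Real.sqrt ((P.rnDeriv (P + Q)) x).toReal
      - Real.sqrt ((Q.rnDeriv (P + Q)) x).toReal) ^ 2 ∂(P + Q)

/-- Rademacher distribution on `{−1,+1} ⊆ ℝ` with mean `m`: it assigns probability
`(1+m)/2` to `+1` and `(1−m)/2` to `−1`. -/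
noncomputable def rad (m : ℝ) : Measure ℝ :=
  ENNReal.ofReal ((1 + m) / 2) • Measure.dirac 1 +
    ENNReal.ofReal ((1 - m) / 2) • Measure.dirac (-1)

lemma dirac_withDensity {α : Type*} [MeasurableSpace α] (a : α) (g : α → ℝ≥0∞)
    (hg : Measurable g) : (Measure.dirac a).withDensity g = g a • Measure.dirac a := by
  ext s hs
  rw [withDensity_apply _ hs]
  classical
  rw [setLIntegral_dirac' hg hs]
  rw [Measure.smul_apply, Measure.dirac_apply' _ hs, smul_eq_mul]
  by_cases h : a ∈ s
  · simp [h]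
  · simp [h]

lemma rad_add_rad_zero (m : ℝ) (hm0 : 0 ≤ m) (hm1 : m ≤ 1) :
    rad m + rad 0 = ENNReal.ofReal ((2 + m) / 2) • Measure.dirac (1 : ℝ)
      + ENNReal.ofReal ((2 - m) / 2) • Measure.dirac (-1 : ℝ) := by
  have h1 : ENNReal.ofReal ((2 + m) / 2) = ENNReal.ofReal ((1 + m) / 2) + ENNReal.ofReal ((1 + 0) / 2) := by
    rw [← ENNReal.ofReal_add (by linarith) (by norm_num)]
    congr 1; ring
  have h2 : ENNReal.ofReal ((2 - m) / 2) = ENNReal.ofReal ((1 - m) / 2) + ENNReal.ofReal ((1 - 0) / 2) := by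
    rw [← ENNReal.ofReal_add (by linarith) (by norm_num)]
    congr 1; ring
  rw [rad, rad, h1, h2, add_smul, add_smul]
  abel

lemma sqHellinger_rad (m : ℝ) (hm0 : 0 ≤ m) (hm1 : m ≤ 1) :
    sqHellinger (rad m) (rad 0) = 2 - Real.sqrt (1 + m) - Real.sqrt (1 - m) := by
  classical
  have h2m : (0:ℝ) < 2 + m := by linarith
  have h2m' : (0:ℝ) < 2 - m := by linarith
  set ν : Measure ℝ := rad m + rad 0 with hνdef
  have hν : ν = ENNReal.ofReal ((2 + m) / 2) • Measure.dirac (1 : ℝ)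
      + ENNReal.ofReal ((2 - m) / 2) • Measure.dirac (-1 : ℝ) := rad_add_rad_zero m hm0 hm1
  set gP : ℝ → ℝ≥0∞ := fun x => ENNReal.ofReal (if x = 1 then (1+m)/(2+m) else (1-m)/(2-m)) with hgPdef
  set gQ : ℝ → ℝ≥0∞ := fun x => ENNReal.ofReal (if x = 1 then 1/(2+m) else 1/(2-m)) with hgQdef
  have hgPm : Measurable gP := by
    apply Measurable.ennreal_ofReal
    exact Measurable.ite (measurableSet_eq) measurable_const measurable_const
  have hgQm : Measurable gQ := by
    apply Measurable.ennreal_ofReal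
    exact Measurable.ite (measurableSet_eq) measurable_const measurable_const
  haveI : IsFiniteMeasure ν := by
    constructor
    rw [hν]
    simp only [Measure.coe_add, Pi.add_apply, Measure.smul_apply, smul_eq_mul]
    rw [Measure.dirac_apply' _ MeasurableSet.univ, Measure.dirac_apply' _ MeasurableSet.univ]
    simp only [Set.indicator_univ, Pi.one_apply, mul_one]
    exact ENNReal.add_lt_top.2 ⟨ENNReal.ofReal_lt_top, ENNReal.ofReal_lt_top⟩
  have key : ∀ (c₁ c₂ : ℝ≥0∞) (g : ℝ → ℝ≥0∞), Measurable g →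
      (c₁ • Measure.dirac (1:ℝ) + c₂ • Measure.dirac (-1:ℝ)).withDensity g
        = (c₁ * g 1) • Measure.dirac (1:ℝ) + (c₂ * g (-1)) • Measure.dirac (-1:ℝ) := by
    intro c₁ c₂ g hg
    rw [withDensity_add_measure, withDensity_smul_measure, withDensity_smul_measure,
      dirac_withDensity _ _ hg, dirac_withDensity _ _ hg, smul_smul, smul_smul]
  have hPd : rad m = ν.withDensity gP := by
    rw [hν, key _ _ _ hgPm]
    have e1 : ENNReal.ofReal ((2 + m) / 2) * gP 1 = ENNReal.ofReal ((1 + m) / 2) := by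
      simp only [hgPdef, if_pos rfl, if_true]
      rw [← ENNReal.ofReal_mul (by positivity)]
      congr 1
      field_simp
    have e2 : ENNReal.ofReal ((2 - m) / 2) * gP (-1) = ENNReal.ofReal ((1 - m) / 2) := by
      simp only [hgPdef, if_neg (by norm_num : (-1:ℝ) ≠ 1)]
      rw [← ENNReal.ofReal_mul (by positivity)]
      congr 1
      field_simp
    rw [e1, e2, rad]
  have hQd : rad 0 = ν.withDensity gQ := by
    rw [hν, key _ _ _ hgQm]
    have e1 : ENNReal.ofReal ((2 + m) / 2) * gQ 1 = ENNReal.ofReal ((1 + 0) / 2) := by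
      simp only [hgQdef, if_pos rfl, if_true]
      rw [← ENNReal.ofReal_mul (by positivity)]
      congr 1
      field_simp
      ring
    have e2 : ENNReal.ofReal ((2 - m) / 2) * gQ (-1) = ENNReal.ofReal ((1 - 0) / 2) := by
      simp only [hgQdef, if_neg (by norm_num : (-1:ℝ) ≠ 1)]
      rw [← ENNReal.ofReal_mul (by positivity)]
      congr 1
      field_simp
      ring
    rw [e1, e2, rad]
  have hrnP : gP =ᵐ[ν] (rad m).rnDeriv ν :=
    Measure.eq_rnDeriv hgPm Measure.MutuallySingular.zero_left (by rw [zero_add]; exact hPd)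
  have hrnQ : gQ =ᵐ[ν] (rad 0).rnDeriv ν :=
    Measure.eq_rnDeriv hgQm Measure.MutuallySingular.zero_left (by rw [zero_add]; exact hQd)
  set A : ℝ := (Real.sqrt ((1+m)/(2+m)) - Real.sqrt (1/(2+m)))^2 with hAdef
  set B : ℝ := (Real.sqrt ((1-m)/(2-m)) - Real.sqrt (1/(2-m)))^2 with hBdef
  set F : ℝ → ℝ := fun x => if x = 1 then A else B with hFdef
  have hFm : Measurable F := Measurable.ite measurableSet_eq measurable_const measurable_const
  have hcongr : sqHellinger (rad m) (rad 0) = ∫ x, F x ∂ν := by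
    rw [sqHellinger, ← hνdef]
    apply integral_congr_ae
    filter_upwards [hrnP, hrnQ] with x h1 h2
    rw [← h1, ← h2]
    by_cases hx : x = 1
    · simp only [hgPdef, hgQdef, hFdef, hAdef, if_pos hx]
      rw [ENNReal.toReal_ofReal (by positivity), ENNReal.toReal_ofReal (by positivity)]
    · simp only [hgPdef, hgQdef, hFdef, hBdef, if_neg hx]
      rw [ENNReal.toReal_ofReal (div_nonneg (by linarith) (by linarith)),
        ENNReal.toReal_ofReal (by positivity)]
  have hFi : ∀ (c : ℝ≥0∞), c ≠ ⊤ → ∀ (a : ℝ), Integrable F (c • Measure.dirac a) := by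
    intro c hc a
    haveI : IsFiniteMeasure (c • Measure.dirac a) := by
      constructor
      rw [Measure.smul_apply, Measure.dirac_apply' _ MeasurableSet.univ]
      simp [lt_top_iff_ne_top, hc]
    refine ⟨hFm.aestronglyMeasurable, HasFiniteIntegral.of_bounded (C := |A| + |B|)
      (ae_of_all _ fun x => ?_)⟩
    by_cases hx : x = 1
    · simp only [hFdef, if_pos hx, Real.norm_eq_abs]
      exact le_add_of_le_of_nonneg le_rfl (abs_nonneg _)
    · simp only [hFdef, if_neg hx, Real.norm_eq_abs]
      exact le_add_of_nonneg_of_le (abs_nonneg _) le_rfl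
  have hint : ∫ x, F x ∂ν = ((2+m)/2) * A + ((2-m)/2) * B := by
    rw [hν, integral_add_measure (hFi _ ENNReal.ofReal_ne_top _) (hFi _ ENNReal.ofReal_ne_top _),
      integral_smul_measure, integral_smul_measure, integral_dirac, integral_dirac,
      ENNReal.toReal_ofReal (by positivity), ENNReal.toReal_ofReal (by positivity)]
    simp only [hFdef, if_pos rfl, if_neg (by norm_num : (-1:ℝ) ≠ 1), smul_eq_mul]
  rw [hcongr, hint]
  have hA : A = (Real.sqrt (1+m) - 1)^2 / (2+m) := by
    rw [hAdef, Real.sqrt_div (by linarith), Real.sqrt_div (by norm_num), Real.sqrt_one,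
      div_sub_div_same, div_pow, Real.sq_sqrt h2m.le]
  have hB : B = (Real.sqrt (1-m) - 1)^2 / (2-m) := by
    rw [hBdef, Real.sqrt_div (by linarith), Real.sqrt_div (by norm_num), Real.sqrt_one,
      div_sub_div_same, div_pow, Real.sq_sqrt h2m'.le]
  rw [hA, hB]
  have ha : Real.sqrt (1+m) ^ 2 = 1 + m := Real.sq_sqrt (by linarith)
  have hb : Real.sqrt (1-m) ^ 2 = 1 - m := Real.sq_sqrt (by linarith)
  field_simp
  ring_nf
  nlinarith [ha, hb]

lemma hell_bounds (m : ℝ) (hm0 : 0 ≤ m) (hm1 : m ≤ 1) :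
    0 ≤ 2 - Real.sqrt (1 + m) - Real.sqrt (1 - m) ∧
      2 - Real.sqrt (1 + m) - Real.sqrt (1 - m) ≤ m ^ 2 := by
  set a := Real.sqrt (1 + m) with hadef
  set b := Real.sqrt (1 - m) with hbdef
  have ha : a ^ 2 = 1 + m := Real.sq_sqrt (by linarith)
  have hb : b ^ 2 = 1 - m := Real.sq_sqrt (by linarith)
  have ha0 : 0 ≤ a := Real.sqrt_nonneg _
  have hb0 : 0 ≤ b := Real.sqrt_nonneg _
  have hab : a * b = Real.sqrt (1 - m ^ 2) := by
    rw [hadef, hbdef, ← Real.sqrt_mul (by linarith)]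
    ring_nf
  have habge : 1 - m ^ 2 ≤ a * b := by
    rw [hab]
    have h1 : (1 - m ^ 2) ≤ 1 := by nlinarith
    have h0 : 0 ≤ 1 - m ^ 2 := by nlinarith
    nlinarith [Real.sq_sqrt h0, Real.sqrt_nonneg (1 - m ^ 2)]
  have hab1 : a * b ≤ 1 := by
    rw [hab]
    calc Real.sqrt (1 - m ^ 2) ≤ Real.sqrt 1 := Real.sqrt_le_sqrt (by nlinarith)
      _ = 1 := Real.sqrt_one
  have h4 : (a + b) ^ 2 ≤ 4 := by nlinarith
  have hs2 : a + b ≤ 2 := by nlinarith [add_nonneg ha0 hb0]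
  constructor
  · linarith
  · nlinarith [mul_nonneg ha0 hb0, sq_nonneg (a + b), sq_nonneg (a + b - 2 + m ^ 2),
      sq_nonneg m, sq_nonneg (a - b)]

lemma hoeff_count (d : ℕ) (hd : 1 ≤ d) (a : Fin d → ℝ) (ha : ∑ i, a i ^ 2 ≤ 1 / d) :
    ∑ s : Fin d → Bool,
        (if (1:ℝ)/2 ≤ ∑ i, (if s i then (1:ℝ) else -1) * a i then (1:ℝ) else 0)
      ≤ 2 ^ d * Real.exp (-(d : ℝ) / 8) := by
  classical
  have hd0 : (0:ℝ) < d := by exact_mod_cast hd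
  set L : ℝ := (d : ℝ) / 2 with hLdef
  have hL0 : 0 ≤ L := by positivity
  have step1 : ∀ s : Fin d → Bool,
      (if (1:ℝ)/2 ≤ ∑ i, (if s i then (1:ℝ) else -1) * a i then (1:ℝ) else 0)
        ≤ Real.exp (L * ((∑ i, (if s i then (1:ℝ) else -1) * a i) - 1/2)) := by
    intro s
    by_cases h : (1:ℝ)/2 ≤ ∑ i, (if s i then (1:ℝ) else -1) * a i
    · rw [if_pos h]
      exact Real.one_le_exp (by nlinarith)
    · rw [if_neg h]
      exact (Real.exp_pos _).le
  calc ∑ s : Fin d → Bool, (if (1:ℝ)/2 ≤ ∑ i, (if s i then (1:ℝ) else -1) * a i then (1:ℝ) else 0)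
      ≤ ∑ s : Fin d → Bool, Real.exp (L * ((∑ i, (if s i then (1:ℝ) else -1) * a i) - 1/2)) :=
        Finset.sum_le_sum fun s _ => step1 s
    _ = Real.exp (-L/2) * ∑ s : Fin d → Bool, ∏ i, Real.exp (L * ((if s i then (1:ℝ) else -1) * a i)) := by
        rw [Finset.mul_sum]
        refine Finset.sum_congr rfl fun s _ => ?_
        rw [← Real.exp_sum, ← Real.exp_add]
        congr 1
        rw [mul_sub, Finset.mul_sum]
        ring
    _ = Real.exp (-L/2) * ∏ i, (Real.exp (L * a i) + Real.exp (L * (-1 * a i))) := by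
        congr 1
        rw [← Fintype.piFinset_univ, ← Finset.prod_univ_sum (fun _ => (Finset.univ : Finset Bool))
          (fun i b => Real.exp (L * ((if b then (1:ℝ) else -1) * a i)))]
        refine Finset.prod_congr rfl fun i _ => ?_
        rw [Fintype.sum_bool]
        simp
    _ ≤ Real.exp (-L/2) * ∏ i, 2 * Real.exp ((L * a i) ^ 2 / 2) := by
        refine mul_le_mul_of_nonneg_left (Finset.prod_le_prod (fun i _ => by positivity)
          (fun i _ => ?_)) (Real.exp_pos _).le
        have := Real.cosh_le_exp_half_sq (L * a i)
        rw [Real.cosh_eq] at this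
        have h2 : Real.exp (L * a i) + Real.exp (-(L * a i)) ≤ 2 * Real.exp ((L * a i) ^ 2 / 2) := by
          linarith
        calc Real.exp (L * a i) + Real.exp (L * (-1 * a i))
            = Real.exp (L * a i) + Real.exp (-(L * a i)) := by ring_nf
          _ ≤ _ := h2
    _ = Real.exp (-L/2) * (2 ^ d * Real.exp (∑ i, (L * a i) ^ 2 / 2)) := by
        rw [Finset.prod_mul_distrib, Finset.prod_const, Real.exp_sum]
        simp
    _ ≤ 2 ^ d * Real.exp (-(d : ℝ) / 8) := by
        have hsum : ∑ i, (L * a i) ^ 2 / 2 ≤ (d:ℝ)/8 := by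
          have : ∑ i, (L * a i) ^ 2 / 2 = L ^ 2 / 2 * ∑ i, a i ^ 2 := by
            rw [Finset.mul_sum]
            refine Finset.sum_congr rfl fun i _ => ?_
            ring
          rw [this, hLdef]
          calc ((d:ℝ)/2) ^ 2 / 2 * ∑ i, a i ^ 2 ≤ ((d:ℝ)/2) ^ 2 / 2 * (1/d) := by
                refine mul_le_mul_of_nonneg_left ha (by positivity)
            _ = (d:ℝ)/8 := by field_simp; ring
        have : Real.exp (-L/2) * (2 ^ d * Real.exp (∑ i, (L * a i) ^ 2 / 2))
            ≤ Real.exp (-L/2) * (2 ^ d * Real.exp ((d:ℝ)/8)) := by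
          refine mul_le_mul_of_nonneg_left (mul_le_mul_of_nonneg_left
            (Real.exp_le_exp.2 hsum) (by positivity)) (Real.exp_pos _).le
        refine this.trans (le_of_eq ?_)
        rw [← mul_assoc, mul_comm (Real.exp (-L/2)), mul_assoc, ← Real.exp_add, hLdef]
        congr 2
        ring

noncomputable def sv (d : ℕ) (s : Fin d → Bool) : EuclideanSpace ℝ (Fin d) :=
  (WithLp.equiv 2 (Fin d → ℝ)).symm (fun i => (if s i then (1:ℝ) else -1) / Real.sqrt d)

lemma sv_apply (d : ℕ) (s : Fin d → Bool) (i : Fin d) :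
    sv d s i = (if s i then (1:ℝ) else -1) / Real.sqrt d := by
  simp [sv]

lemma sv_norm (d : ℕ) (hd : 1 ≤ d) (s : Fin d → Bool) : ‖sv d s‖ = 1 := by
  have hd0 : (0:ℝ) < d := by exact_mod_cast hd
  rw [EuclideanSpace.norm_eq]
  have h : ∀ i : Fin d, ‖sv d s i‖ ^ 2 = 1 / d := by
    intro i
    have h2 : ((if s i then (1:ℝ) else -1)) ^ 2 = 1 := by split <;> norm_num
    rw [sv_apply, Real.norm_eq_abs, sq_abs, div_pow, h2, Real.sq_sqrt hd0.le]
  rw [Finset.sum_congr rfl fun i _ => h i, Finset.sum_const, Finset.card_univ,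
    Fintype.card_fin, nsmul_eq_mul, mul_one_div, div_self (ne_of_gt hd0), Real.sqrt_one]

lemma sv_inner (d : ℕ) (s : Fin d → Bool) (x : EuclideanSpace ℝ (Fin d)) :
    ⟪sv d s, x⟫ = ∑ i, (if s i then (1:ℝ) else -1) * (x i / Real.sqrt d) := by
  rw [PiLp.inner_apply]
  refine Finset.sum_congr rfl fun i _ => ?_
  simp only [RCLike.inner_apply, conj_trivial, sv_apply]
  ring


set_option maxHeartbeats 1000000 in
/-- lower bound on the Decision-Estimation Coefficient for ReLU
bandits over the Euclidean unit ball.  The models are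
`M_v(π) = Rad(relu(⟪v,π⟫ − (1−ε)))` for unit vectors `v`, with reference model
`M̄(π) = Rad(0)`; `ε − f_v(π)` is the regret of `π` under `M_v`. -/
theorem relu_bandit_dec_lower_bound (d : ℕ) (hd : 16 ≤ d) (γ ε : ℝ) (hγ : 0 < γ)
    (hε : ε = min (Real.exp ((d : ℝ) / 8) / (6 * γ)) (1 / 2))
    (p : Measure {x : EuclideanSpace ℝ (Fin d) // ‖x‖ ≤ 1}) [IsProbabilityMeasure p] :
    min (Real.exp ((d : ℝ) / 8) / (24 * γ)) (1 / 8) ≤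
      ⨆ v : {v : EuclideanSpace ℝ (Fin d) // ‖v‖ = 1},
        ∫ π : {x : EuclideanSpace ℝ (Fin d) // ‖x‖ ≤ 1},
          (ε - max (⟪v.1, π.1⟫ - (1 - ε)) 0
            - γ * sqHellinger (rad (max (⟪v.1, π.1⟫ - (1 - ε)) 0)) (rad 0)) ∂p := by
  classical
  have hd1 : 1 ≤ d := le_trans (by norm_num) hd
  have hd0 : (0:ℝ) < d := by exact_mod_cast hd1
  set E : ℝ := Real.exp ((d : ℝ) / 8) with hEdef
  have hE0 : (0:ℝ) < E := Real.exp_pos _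
  have hε0 : 0 < ε := by
    rw [hε]; exact lt_min (by positivity) (by norm_num)
  have hεhalf : ε ≤ 1/2 := by rw [hε]; exact min_le_right _ _
  have hγε : γ * ε ≤ E / 6 := by
    have h1 : ε ≤ E / (6 * γ) := by rw [hε]; exact min_le_left _ _
    calc γ * ε ≤ γ * (E / (6 * γ)) := by nlinarith
      _ = E / 6 := by field_simp
  -- notation for the regret function
  set Pb := {x : EuclideanSpace ℝ (Fin d) // ‖x‖ ≤ 1} with hPb
  set G : EuclideanSpace ℝ (Fin d) → Pb → ℝ :=
    fun w π => ε - max (⟪w, π.1⟫ - (1 - ε)) 0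
      - γ * sqHellinger (rad (max (⟪w, π.1⟫ - (1 - ε)) 0)) (rad 0) with hGdef
  -- basic facts about m = max (⟪w,π⟫ - (1-ε)) 0 when ‖w‖ = 1
  have hmfacts : ∀ (w : EuclideanSpace ℝ (Fin d)), ‖w‖ = 1 → ∀ π : Pb,
      0 ≤ max (⟪w, π.1⟫ - (1 - ε)) 0 ∧ max (⟪w, π.1⟫ - (1 - ε)) 0 ≤ ε := by
    intro w hw π
    refine ⟨le_max_right _ _, max_le ?_ hε0.le⟩
    have hip : ⟪w, π.1⟫ ≤ 1 := by
      calc ⟪w, π.1⟫ ≤ ‖w‖ * ‖π.1‖ := real_inner_le_norm _ _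
        _ ≤ 1 := by rw [hw, one_mul]; exact π.2
    linarith
  -- rewrite G using the explicit Hellinger formula
  have hGeq : ∀ (w : EuclideanSpace ℝ (Fin d)), ‖w‖ = 1 → ∀ π : Pb,
      G w π = ε - max (⟪w, π.1⟫ - (1 - ε)) 0
        - γ * (2 - Real.sqrt (1 + max (⟪w, π.1⟫ - (1 - ε)) 0)
            - Real.sqrt (1 - max (⟪w, π.1⟫ - (1 - ε)) 0)) := by
    intro w hw π
    obtain ⟨hm0, hmε⟩ := hmfacts w hw π
    rw [hGdef]
    simp only
    rw [sqHellinger_rad _ hm0 (hmε.trans (by linarith))]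
  -- measurability of the inner product map
  have hinnm : ∀ w : EuclideanSpace ℝ (Fin d), Measurable (fun π : Pb => ⟪w, π.1⟫) := by
    intro w
    exact (Continuous.inner continuous_const continuous_id).measurable.comp
      measurable_subtype_coe
  have hmm : ∀ w : EuclideanSpace ℝ (Fin d),
      Measurable (fun π : Pb => max (⟪w, π.1⟫ - (1 - ε)) 0) :=
    fun w => ((hinnm w).sub measurable_const).max measurable_const
  -- G is measurable and bounded for unit w, hence integrable
  have hGmeas : ∀ (w : EuclideanSpace ℝ (Fin d)), ‖w‖ = 1 → Measurable (G w) := by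
    intro w hw
    have : G w = fun π => ε - max (⟪w, π.1⟫ - (1 - ε)) 0
        - γ * (2 - Real.sqrt (1 + max (⟪w, π.1⟫ - (1 - ε)) 0)
            - Real.sqrt (1 - max (⟪w, π.1⟫ - (1 - ε)) 0)) := funext fun π => hGeq w hw π
    rw [this]
    refine (measurable_const.sub (hmm w)).sub (measurable_const.mul ?_)
    refine ((measurable_const.sub ?_).sub ?_)
    · exact (Real.continuous_sqrt.measurable).comp (measurable_const.add (hmm w))
    · exact (Real.continuous_sqrt.measurable).comp (measurable_const.sub (hmm w))
  have hGbd : ∀ (w : EuclideanSpace ℝ (Fin d)), ‖w‖ = 1 → ∀ π : Pb,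
      ‖G w π‖ ≤ 1 + γ := by
    intro w hw π
    obtain ⟨hm0, hmε⟩ := hmfacts w hw π
    set m := max (⟪w, π.1⟫ - (1 - ε)) 0
    have hm1 : m ≤ 1 := hmε.trans (by linarith)
    obtain ⟨hH0, hH2⟩ := hell_bounds m hm0 hm1
    have hHle : 2 - Real.sqrt (1 + m) - Real.sqrt (1 - m) ≤ 1 := by nlinarith
    rw [hGeq w hw π, Real.norm_eq_abs, abs_le]
    constructor <;> nlinarith
  have hGint : ∀ (w : EuclideanSpace ℝ (Fin d)), (hw : ‖w‖ = 1) → Integrable (G w) p := by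
    intro w hw
    exact ⟨(hGmeas w hw).aestronglyMeasurable,
      HasFiniteIntegral.of_bounded (C := 1 + γ) (ae_of_all _ (hGbd w hw))⟩
  -- the indicator functions
  set χ : (Fin d → Bool) → Pb → ℝ :=
    fun s π => if (1:ℝ)/2 ≤ ⟪sv d s, π.1⟫ then 1 else 0 with hχdef
  have hχm : ∀ s, Measurable (χ s) := by
    intro s
    exact Measurable.ite (measurableSet_le measurable_const (hinnm _))
      measurable_const measurable_const
  have hχ01 : ∀ s π, 0 ≤ χ s π ∧ χ s π ≤ 1 := by
    intro s π
    rw [hχdef]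
    constructor <;> [skip; skip] <;> simp only <;> split <;> norm_num
  have hχint : ∀ s, Integrable (χ s) p := by
    intro s
    refine ⟨(hχm s).aestronglyMeasurable,
      HasFiniteIntegral.of_bounded (C := 1) (ae_of_all _ fun π => ?_)⟩
    rw [Real.norm_eq_abs, abs_le]
    have := hχ01 s π
    constructor <;> linarith [this.1, this.2]
  -- pointwise Hoeffding bound
  have hpt : ∀ π : Pb, ∑ s : Fin d → Bool, χ s π ≤ 2 ^ d * Real.exp (-(d:ℝ)/8) := by
    intro π
    set a : Fin d → ℝ := fun i => π.1 i / Real.sqrt d with hadef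
    have hsum : ∑ i, a i ^ 2 ≤ 1 / d := by
      have h1 : ∑ i, (π.1 i) ^ 2 ≤ 1 := by
        have h2 : ∑ i, (π.1 i) ^ 2 = ‖π.1‖ ^ 2 := by
          rw [EuclideanSpace.norm_eq, Real.sq_sqrt (by positivity)]
          exact Finset.sum_congr rfl fun i _ => by rw [Real.norm_eq_abs, sq_abs]
        rw [h2]
        calc ‖π.1‖ ^ 2 ≤ 1 ^ 2 := pow_le_pow_left₀ (norm_nonneg _) π.2 2
          _ = 1 := one_pow 2
      have h3 : ∑ i, a i ^ 2 = (∑ i, (π.1 i) ^ 2) / d := by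
        rw [Finset.sum_div]
        refine Finset.sum_congr rfl fun i _ => ?_
        rw [hadef]
        simp only
        rw [div_pow, Real.sq_sqrt hd0.le]
      rw [h3]
      exact div_le_div_of_nonneg_right h1 hd0.le
    have hkey := hoeff_count d hd1 a hsum
    have heq : ∀ s, χ s π
        = if (1:ℝ)/2 ≤ ∑ i, (if s i then (1:ℝ) else -1) * a i then (1:ℝ) else 0 := by
      intro s
      rw [hχdef]
      simp only
      rw [sv_inner]
    rw [Finset.sum_congr rfl fun s _ => heq s]
    exact hkey
  -- sum of the integrals is small
  have hsumint : ∑ s : Fin d → Bool, ∫ π, χ s π ∂p ≤ 2 ^ d * Real.exp (-(d:ℝ)/8) := by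
    rw [← integral_finset_sum _ (fun s _ => hχint s)]
    calc ∫ π, ∑ s : Fin d → Bool, χ s π ∂p
        ≤ ∫ _, (2 ^ d * Real.exp (-(d:ℝ)/8) : ℝ) ∂p :=
          integral_mono (integrable_finset_sum _ fun s _ => hχint s) (integrable_const _) hpt
      _ = 2 ^ d * Real.exp (-(d:ℝ)/8) := by
          rw [integral_const, probReal_univ, one_smul]
  -- pick a good sign vector
  have hgood : ∃ s₀ : Fin d → Bool, ∫ π, χ s₀ π ∂p ≤ Real.exp (-(d:ℝ)/8) := by
    by_contra h
    push_neg at h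
    have hlt : (2:ℝ) ^ d * Real.exp (-(d:ℝ)/8)
        < ∑ s : Fin d → Bool, ∫ π, χ s π ∂p := by
      have := Finset.sum_lt_sum_of_nonempty (Finset.univ_nonempty)
        (fun s (_ : s ∈ Finset.univ) => h s)
      rw [Finset.sum_const, Finset.card_univ] at this
      have hcard : Fintype.card (Fin d → Bool) = 2 ^ d := by
        rw [Fintype.card_fun, Fintype.card_bool, Fintype.card_fin]
      rw [hcard, nsmul_eq_mul] at this
      simpa using this
    exact absurd hsumint (not_le.2 hlt)
  obtain ⟨s₀, hs₀⟩ := hgood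
  -- the chosen unit vector
  set v₀ : {v : EuclideanSpace ℝ (Fin d) // ‖v‖ = 1} := ⟨sv d s₀, sv_norm d hd1 s₀⟩ with hv₀
  -- pointwise lower bound
  set ℓ : Pb → ℝ := fun π => ε - ((1 + γ * ε) * ε) * χ s₀ π with hℓdef
  have hlow : ∀ π : Pb, ℓ π ≤ G (sv d s₀) π := by
    intro π
    obtain ⟨hm0, hmε⟩ := hmfacts (sv d s₀) (sv_norm d hd1 s₀) π
    set m := max (⟪sv d s₀, π.1⟫ - (1 - ε)) 0 with hmdef
    have hm1 : m ≤ 1 := hmε.trans (by linarith)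
    obtain ⟨hH0, hH2⟩ := hell_bounds m hm0 hm1
    have hmχ : m ≤ ε * χ s₀ π := by
      rw [hχdef]
      simp only
      by_cases hhalf : (1:ℝ)/2 ≤ ⟪sv d s₀, π.1⟫
      · rw [if_pos hhalf, mul_one]; exact hmε
      · rw [if_neg hhalf, mul_zero]
        push_neg at hhalf
        rw [hmdef, max_eq_right (by linarith)]
    rw [hGeq _ (sv_norm d hd1 s₀) π, hℓdef]
    simp only
    rw [← hmdef]
    have hγH : γ * (2 - Real.sqrt (1 + m) - Real.sqrt (1 - m)) ≤ γ * (ε * m) := by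
      refine mul_le_mul_of_nonneg_left (hH2.trans ?_) hγ.le
      nlinarith
    have hχ0 := (hχ01 s₀ π).1
    nlinarith [mul_nonneg (mul_nonneg hγ.le hε0.le) (sub_nonneg.2 hmχ)]
  have hℓint : Integrable ℓ p := by
    rw [hℓdef]
    exact (integrable_const ε).sub ((hχint s₀).const_mul _)
  have hℓval : ∫ π, ℓ π ∂p = ε - ((1 + γ * ε) * ε) * ∫ π, χ s₀ π ∂p := by
    rw [hℓdef]
    rw [integral_sub (integrable_const ε) ((hχint s₀).const_mul _)]
    rw [integral_const, probReal_univ, one_smul, integral_const_mul]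
  -- quantitative bound
  have hq : Real.exp (-(d:ℝ)/8) ≤ 1/3 ∧ γ * ε * Real.exp (-(d:ℝ)/8) ≤ 1/6 := by
    constructor
    · have h2 : Real.exp (-(d:ℝ)/8) ≤ Real.exp (-2 : ℝ) := by
        apply Real.exp_le_exp.2
        have : (16:ℝ) ≤ d := by exact_mod_cast hd
        linarith
      have h3 : Real.exp (-2:ℝ) ≤ 1/3 := by
        have h4 : (3:ℝ) ≤ Real.exp 2 := by linarith [Real.add_one_le_exp (2:ℝ)]
        rw [Real.exp_neg]
        calc (Real.exp 2)⁻¹ ≤ (3:ℝ)⁻¹ := by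
              exact inv_anti₀ (by norm_num) h4
          _ = 1/3 := by norm_num
      linarith
    · have : Real.exp (-(d:ℝ)/8) = E⁻¹ := by
        rw [hEdef, ← Real.exp_neg]
        congr 1
        ring
      rw [this]
      calc γ * ε * E⁻¹ ≤ (E/6) * E⁻¹ := by
            refine mul_le_mul_of_nonneg_right hγε (by positivity)
        _ = 1/6 := by field_simp
  have hχval : ∫ π, χ s₀ π ∂p ≤ Real.exp (-(d:ℝ)/8) := hs₀
  have hχnn : 0 ≤ ∫ π, χ s₀ π ∂p := integral_nonneg fun π => (hχ01 s₀ π).1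
  have hmain : ε/2 ≤ ∫ π, G (sv d s₀) π ∂p := by
    have h1 : ∫ π, ℓ π ∂p ≤ ∫ π, G (sv d s₀) π ∂p :=
      integral_mono hℓint (hGint _ (sv_norm d hd1 s₀)) hlow
    have h2 : ((1 + γ * ε) * ε) * ∫ π, χ s₀ π ∂p ≤ ((1 + γ * ε) * ε) * Real.exp (-(d:ℝ)/8) := by
      refine mul_le_mul_of_nonneg_left hχval (by nlinarith [mul_pos hγ hε0])
    have h3 : ((1 + γ * ε) * ε) * Real.exp (-(d:ℝ)/8) ≤ ε/2 := by
      obtain ⟨hqa, hqb⟩ := hq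
      have hexp0 : 0 ≤ Real.exp (-(d:ℝ)/8) := (Real.exp_pos _).le
      nlinarith
    rw [hℓval] at h1
    linarith
  -- bounded above
  have hbdd : BddAbove (Set.range fun v : {v : EuclideanSpace ℝ (Fin d) // ‖v‖ = 1} =>
      ∫ π, G v.1 π ∂p) := by
    refine ⟨1 + γ, ?_⟩
    rintro x ⟨u, rfl⟩
    have := norm_integral_le_of_norm_le_const (μ := p) (f := G u.1) (C := 1 + γ)
      (ae_of_all _ (hGbd u.1 u.2))
    rw [probReal_univ, mul_one, Real.norm_eq_abs] at this
    exact (le_abs_self _).trans this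
  -- finish
  have heq24 : E / (24 * γ) = (E / (6 * γ)) / 4 := by
    rw [div_div]
    congr 1
    ring
  have htarget : min (E / (24 * γ)) (1/8 : ℝ) = ε / 4 := by
    rw [hε, heq24]
    rcases le_total (E / (6 * γ)) (1/2 : ℝ) with h | h
    · rw [min_eq_left h, min_eq_left (by linarith)]
    · rw [min_eq_right h, min_eq_right (by linarith)]
      norm_num
  rw [htarget]
  have hfinal : ε / 4 ≤ ∫ π, G (sv d s₀) π ∂p := by linarith
  refine hfinal.trans ?_
  exact le_ciSup hbdd v₀
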